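/- arXiv:2208.10079 — 3 statements merged into one kernel-verified Lean document; each statement's English description precedes it below -/
import Mathlib

section
/- For every element a of the additive monoid ⟨a_1, …, a_m⟩ = {ℓ_1 a_1 + ⋯ + ℓ_m a_m : ℓ_i ∈ ℤ_{≥0}}, there exists a unique (k_1, …, k_m) ∈ B(A_m) such that Σ_{i=1}^m a_i k_i = a. -/
open Finset

/-- `dseq a i` is `gcd(a 1, …, a i)`. -/
def dseq (a : ℕ → ℕ) (i : ℕ) : ℕ := Finset.gcd (Finset.Icc 1 i) a

/-- `BAm m a ℓ` says that the tuple `(ℓ 1, …, ℓ m)` (encoded as a function on `ℕ`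
supported on `[1, m]`) belongs to the set `B(A_m)`, i.e. `0 ≤ ℓ i ≤ d_{i-1}/d_i − 1`
for all `2 ≤ i ≤ m`. -/
def BAm (m : ℕ) (a : ℕ → ℕ) (ℓ : ℕ → ℕ) : Prop :=
  (∀ j, (j < 1 ∨ m < j) → ℓ j = 0) ∧
    ∀ i, 2 ≤ i → i ≤ m → ℓ i < dseq a (i - 1) / dseq a i

/-- `Telescopic m a` says that `(a 1, …, a m)` is a telescopic sequence:
`m ≥ 2`, all `a i ≥ 2`, `gcd(a 1, …, a m) = 1`, and for every `2 ≤ i ≤ m` the number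
`a i / d i` is a `ℤ_{≥0}`-linear combination of `a 1 / d (i-1), …, a (i-1) / d (i-1)`
(the latter condition is stated multiplied through by `d (i-1) * d i`, which is equivalent). -/
def Telescopic (m : ℕ) (a : ℕ → ℕ) : Prop :=
  2 ≤ m ∧ (∀ i, 1 ≤ i → i ≤ m → 2 ≤ a i) ∧ dseq a m = 1 ∧
    ∀ i, 2 ≤ i → i ≤ m → ∃ ℓ : ℕ → ℕ, (∀ j, (j < 1 ∨ i ≤ j) → ℓ j = 0) ∧
      a i * dseq a (i - 1) = dseq a i * ∑ j ∈ Finset.Icc 1 m, ℓ j * a j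

lemma dseq_dvd_a {a : ℕ → ℕ} {i j : ℕ} (h1 : 1 ≤ j) (h2 : j ≤ i) : dseq a i ∣ a j :=
  Finset.gcd_dvd (by simp [Finset.mem_Icc]; omega)

lemma dseq_pos {a : ℕ → ℕ} (h : 2 ≤ a 1) {i : ℕ} (hi : 1 ≤ i) : 0 < dseq a i := by
  rcases Nat.eq_zero_or_pos (dseq a i) with h0 | h0
  · have := dseq_dvd_a (a := a) (le_refl 1) hi
    rw [h0] at this
    simp at this; omega
  · exact h0

lemma dseq_succ (a : ℕ → ℕ) (i : ℕ) (hi : 1 ≤ i) :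
    dseq a (i+1) = Nat.gcd (a (i+1)) (dseq a i) := by
  unfold dseq
  rw [show Finset.Icc 1 (i+1) = insert (i+1) (Finset.Icc 1 i) by ext x; simp; omega]
  rw [Finset.gcd_insert]; rfl

lemma dseq_succ_dvd (a : ℕ → ℕ) (i : ℕ) (hi : 1 ≤ i) : dseq a (i+1) ∣ dseq a i := by
  rw [dseq_succ a i hi]; exact Nat.gcd_dvd_right _ _

/-- From the telescopic condition: `∑ μ j * a j = a s * (d_{s-1}/d_s)` with `μ` supported on `[1,s)`. -/
lemma tel_sum {m : ℕ} {a : ℕ → ℕ} (hT : Telescopic m a) {s : ℕ} (hs2 : 2 ≤ s) (hsm : s ≤ m) :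
    ∃ μ : ℕ → ℕ, (∀ j, (j < 1 ∨ s ≤ j) → μ j = 0) ∧
      ∑ j ∈ Finset.Icc 1 m, μ j * a j = a s * (dseq a (s-1) / dseq a s) := by
  obtain ⟨hm, ha, h1, htel⟩ := hT
  obtain ⟨μ, hμs, hμ⟩ := htel s hs2 hsm
  refine ⟨μ, hμs, ?_⟩
  have he : 0 < dseq a s := dseq_pos (ha 1 le_rfl (by omega)) (by omega)
  have hdvd : dseq a s ∣ dseq a (s-1) := by
    have := dseq_succ_dvd a (s-1) (by omega)
    rwa [show s - 1 + 1 = s by omega] at this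
  apply Nat.eq_of_mul_eq_mul_left he
  rw [← hμ, Nat.mul_left_comm, Nat.mul_div_cancel' hdvd, Nat.mul_comm]
open Finset

lemma uniq_aux {m : ℕ} {a : ℕ → ℕ} (hT : Telescopic m a) :
    ∀ i, i ≤ m → ∀ k k' : ℕ → ℕ,
      (∀ j, 2 ≤ j → j ≤ m → k j < dseq a (j-1) / dseq a j) →
      (∀ j, 2 ≤ j → j ≤ m → k' j < dseq a (j-1) / dseq a j) →
      ∑ j ∈ Finset.Icc 1 i, a j * k j = ∑ j ∈ Finset.Icc 1 i, a j * k' j →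
      ∀ j, 1 ≤ j → j ≤ i → k j = k' j := by
  obtain ⟨hm, ha, h1d, htel⟩ := hT
  intro i
  induction i with
  | zero => intro _ k k' _ _ _ j hj1 hj0; omega
  | succ i ih =>
    intro him k k' hk hk' hsum j hj1 hji
    rw [Finset.sum_Icc_succ_top (by omega), Finset.sum_Icc_succ_top (by omega)] at hsum
    rcases Nat.eq_zero_or_pos i with rfl | hi1
    · -- i + 1 = 1
      simp at hsum
      have ha1 : 2 ≤ a 1 := ha 1 le_rfl (by omega)
      have hj : j = 1 := by omega
      subst hj
      rcases hsum with h | h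
      · exact h
      · omega
    · -- the top index s = i+1 ≥ 2
      set s := i + 1 with hs
      have hs2 : 2 ≤ s := by omega
      have ha1 : 2 ≤ a 1 := ha 1 le_rfl (by omega)
      set d := dseq a i with hd
      set e := dseq a s with he
      have hdpos : 0 < d := dseq_pos ha1 hi1
      have hepos : 0 < e := dseq_pos ha1 (by omega)
      have hed : e ∣ d := dseq_succ_dvd a i hi1
      set c := d / e with hc
      have hdc : d = e * c := by rw [hc, Nat.mul_div_cancel' hed]
      have hcpos : 0 < c := by
        rcases Nat.eq_zero_or_pos c with h0 | h0
        · rw [h0, Nat.mul_zero] at hdc; omega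
        · exact h0
      have heb : e ∣ a s := dseq_dvd_a (by omega) le_rfl
      set b := a s / e with hb
      have hab : a s = e * b := by rw [hb, Nat.mul_div_cancel' heb]
      have hge : Nat.gcd (a s) d = e := (dseq_succ a i hi1).symm
      have hcb : Nat.gcd c b = 1 := by
        have : Nat.gcd (e * b) (e * c) = e * Nat.gcd b c := Nat.gcd_mul_left e b c
        rw [← hab, ← hdc, hge] at this
        have := Nat.eq_of_mul_eq_mul_left hepos (by omega : e * Nat.gcd b c = e * 1)
        rw [Nat.gcd_comm]; omega
      -- divisibility of the partial sums by d
      have hdk : d ∣ ∑ j ∈ Finset.Icc 1 i, a j * k j :=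
        Finset.dvd_sum (fun j hj => by
          simp [Finset.mem_Icc] at hj
          exact Dvd.dvd.mul_right (dseq_dvd_a hj.1 hj.2) _)
      have hdk' : d ∣ ∑ j ∈ Finset.Icc 1 i, a j * k' j :=
        Finset.dvd_sum (fun j hj => by
          simp [Finset.mem_Icc] at hj
          exact Dvd.dvd.mul_right (dseq_dvd_a hj.1 hj.2) _)
      obtain ⟨x, hx⟩ := hdk
      obtain ⟨y, hy⟩ := hdk'
      have hmod : a s * k s ≡ a s * k' s [MOD d] := by
        show (a s * k s) % d = (a s * k' s) % d
        have : (∑ j ∈ Finset.Icc 1 i, a j * k j + a s * k s) % d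
            = (∑ j ∈ Finset.Icc 1 i, a j * k' j + a s * k' s) % d := by rw [hsum]
        rwa [hx, hy, Nat.mul_add_mod, Nat.mul_add_mod] at this
      have hmod2 : (e * b) * k s ≡ (e * b) * k' s [MOD e * c] := by
        rwa [← hab, ← hdc]
      rw [Nat.mul_assoc, Nat.mul_assoc] at hmod2
      have hcan := Nat.ModEq.cancel_left_div_gcd (by positivity) hmod2
      have hgcd : Nat.gcd (e * c) e = e := Nat.gcd_eq_right ⟨c, rfl⟩
      have hmod3 : b * k s ≡ b * k' s [MOD c] := by
        rwa [hgcd, Nat.mul_div_cancel_left c hepos] at hcan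
      have hcan2 := Nat.ModEq.cancel_left_div_gcd hcpos hmod3
      have hgcd2 : Nat.gcd c b = 1 := hcb
      have hmod4 : k s ≡ k' s [MOD c] := by
        rwa [hgcd2, Nat.div_one] at hcan2
      have hks : k s < c := by
        have := hk s hs2 him
        rwa [show s - 1 = i by omega, ← hd, ← he, ← hc] at this
      have hks' : k' s < c := by
        have := hk' s hs2 him
        rwa [show s - 1 = i by omega, ← hd, ← he, ← hc] at this
      have hkk : k s = k' s := by
        have : k s % c = k' s % c := hmod4
        rwa [Nat.mod_eq_of_lt hks, Nat.mod_eq_of_lt hks'] at this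
      rcases Nat.lt_or_ge j s with hjlt | hjge
      · -- use IH
        have hsum' : ∑ j ∈ Finset.Icc 1 i, a j * k j = ∑ j ∈ Finset.Icc 1 i, a j * k' j := by
          rw [hkk] at hsum; omega
        exact ih (by omega) k k' hk hk' hsum' j hj1 (by omega)
      · have : j = s := by omega
        rw [this]; exact hkk
lemma exists_reduce {m : ℕ} {a : ℕ → ℕ} (hT : Telescopic m a) :
    ∀ t : ℕ, ∀ ℓ : ℕ → ℕ, (∀ j, (j < 1 ∨ m < j) → ℓ j = 0) →
      (∀ i, t < i → 2 ≤ i → i ≤ m → ℓ i < dseq a (i-1) / dseq a i) →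
      ∃ k : ℕ → ℕ, (∀ j, (j < 1 ∨ m < j) → k j = 0) ∧
        (∀ i, 2 ≤ i → i ≤ m → k i < dseq a (i-1) / dseq a i) ∧
        ∑ i ∈ Finset.Icc 1 m, a i * k i = ∑ j ∈ Finset.Icc 1 m, ℓ j * a j := by
  intro t
  induction t with
  | zero =>
    intro ℓ hsupp hb
    exact ⟨ℓ, hsupp, fun i h2 hm => hb i (by omega) h2 hm,
      Finset.sum_congr rfl (fun j _ => Nat.mul_comm _ _)⟩
  | succ t ih =>
    intro ℓ hsupp hb
    by_cases hcase : t + 1 < 2 ∨ m < t + 1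
    · exact ih ℓ hsupp (fun i h1 h2 hm => hb i (by omega) h2 hm)
    · push_neg at hcase
      set s := t + 1 with hs
      have hs2 : 2 ≤ s := hcase.1
      have hsm : s ≤ m := hcase.2
      have ha1 : 2 ≤ a 1 := hT.2.1 1 le_rfl (by omega)
      obtain ⟨μ, hμs, hμ⟩ := tel_sum hT hs2 hsm
      set c := dseq a (s-1) / dseq a s with hc
      have hcpos : 0 < c := by
        have hed : dseq a s ∣ dseq a (s-1) := by
          have := dseq_succ_dvd a (s-1) (by omega)
          rwa [show s - 1 + 1 = s by omega] at this
        have h1 : 0 < dseq a (s-1) := dseq_pos ha1 (by omega)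
        have h2 : 0 < dseq a s := dseq_pos ha1 (by omega)
        exact Nat.div_pos (Nat.le_of_dvd h1 hed) h2
      set q := ℓ s / c with hq
      set r := ℓ s % c with hr
      set ℓ' : ℕ → ℕ := fun j => (if j = s then r else ℓ j) + q * μ j with hℓ'
      have hssup : ∀ j, (j < 1 ∨ m < j) → ℓ' j = 0 := by
        intro j hj
        have h1 : ℓ j = 0 := hsupp j hj
        have h2 : μ j = 0 := hμs j (by omega)
        have h3 : j ≠ s := by omega
        simp [hℓ', h1, h2, h3]
      have hbnd : ∀ i, t < i → 2 ≤ i → i ≤ m → ℓ' i < dseq a (i-1) / dseq a i := by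
        intro i h1 h2 hm'
        have hμ0 : μ i = 0 := hμs i (by omega)
        rcases Nat.eq_or_lt_of_le (show s ≤ i by omega) with heq | hlt
        · have hμ0' : μ s = 0 := hμs s (by omega)
          have hei : ℓ' i = r := by simp [hℓ', ← heq, hμ0']
          have hci : dseq a (i-1) / dseq a i = c := by rw [hc, heq]
          rw [hei, hci, hr]
          exact Nat.mod_lt _ hcpos
        · have : i ≠ s := by omega
          simp [hℓ', this, hμ0]
          exact hb i (by omega) h2 hm'
      obtain ⟨k, hk1, hk2, hk3⟩ := ih ℓ' hssup hbnd
      refine ⟨k, hk1, hk2, ?_⟩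
      rw [hk3]
      -- now show ∑ ℓ' j * a j = ∑ ℓ j * a j
      have hsmem : s ∈ Finset.Icc 1 m := by simp [Finset.mem_Icc]; omega
      have split : ∀ f : ℕ → ℕ, ∑ j ∈ Finset.Icc 1 m, f j
          = ∑ j ∈ (Finset.Icc 1 m).erase s, f j + f s :=
        fun f => (Finset.sum_erase_add _ f hsmem).symm
      have e1 : ∑ j ∈ Finset.Icc 1 m, ℓ' j * a j
          = ∑ j ∈ (Finset.Icc 1 m).erase s, ℓ j * a j + r * a s
            + q * (a s * c) := by
        rw [split (fun j => ℓ' j * a j), ← hμ, Finset.mul_sum]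
        have congr1 : ∑ j ∈ (Finset.Icc 1 m).erase s, ℓ' j * a j
            = ∑ j ∈ (Finset.Icc 1 m).erase s, (ℓ j * a j + q * (μ j * a j)) := by
          apply Finset.sum_congr rfl
          intro j hj
          have : j ≠ s := Finset.ne_of_mem_erase hj
          simp [hℓ', this]; ring
        rw [congr1, Finset.sum_add_distrib]
        have : ℓ' s * a s = r * a s + q * (μ s * a s) := by
          have hμ0 : μ s = 0 := hμs s (by omega)
          simp [hℓ', hμ0]
        rw [this]
        have hμsum : ∑ j ∈ (Finset.Icc 1 m).erase s, q * (μ j * a j) + q * (μ s * a s)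
            = ∑ j ∈ Finset.Icc 1 m, q * (μ j * a j) := Finset.sum_erase_add _ _ hsmem
        omega
      have e2 : ∑ j ∈ Finset.Icc 1 m, ℓ j * a j
          = ∑ j ∈ (Finset.Icc 1 m).erase s, ℓ j * a j + (c * q + r) * a s := by
        rw [split (fun j => ℓ j * a j)]
        have : c * q + r = ℓ s := Nat.div_add_mod (ℓ s) c
        rw [this]
      rw [e1, e2]; ring

/-- For every element `n` of the additive monoid `⟨a 1, …, a m⟩` there is a unique tuple
`(k 1, …, k m) ∈ B(A_m)` with `Σ_{i=1}^m a i * k i = n`. -/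
theorem exists_unique_BAm_rep (m : ℕ) (a : ℕ → ℕ) (hT : Telescopic m a) (n : ℕ)
    (hn : ∃ ℓ : ℕ → ℕ, (∀ j, (j < 1 ∨ m < j) → ℓ j = 0) ∧
      n = ∑ j ∈ Finset.Icc 1 m, ℓ j * a j) :
    ∃! k : ℕ → ℕ, BAm m a k ∧ ∑ i ∈ Finset.Icc 1 m, a i * k i = n := by
  obtain ⟨ℓ, hsupp, rfl⟩ := hn
  obtain ⟨k, hks, hkb, hsum⟩ := exists_reduce hT m ℓ hsupp (fun i h1 h2 hm => by omega)
  refine ⟨k, ⟨⟨hks, hkb⟩, hsum⟩, ?_⟩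
  rintro k' ⟨⟨hk's, hk'b⟩, hsum'⟩
  funext j
  by_cases hj : 1 ≤ j ∧ j ≤ m
  · exact uniq_aux hT m le_rfl k' k hk'b hkb (by rw [hsum', hsum]) j hj.1 hj.2
  · rw [hk's j (by omega), hks j (by omega)]
end

section
/- The Schur function S_{μ(A_m)}(T) = det(p_{μ_i − i + j}(T))_{1 ≤ i, j ≤ g}, where μ(A_m) = (w_g − (g−1), w_{g−1} − (g−2), …, w_2 − 1, w_1) is the partition attached to the gap sequence, is a polynomial only in the variables T_{w_1}, …, T_{w_g}; that is, it lies in the ℚ-subalgebra of ℚ[T_1, T_2, …] generated by T_{w_1}, …, T_{w_g}. -/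
open Finset MvPolynomial

noncomputable section

/-- The formal power series `f = Σ_{j≥1} T_j k^j` in one variable `k` over the
polynomial ring `ℚ[T_1, T_2, …]` (with `T_j = X j`). -/
def fSeries : PowerSeries (MvPolynomial ℕ ℚ) :=
  PowerSeries.mk fun j => if j = 0 then 0 else MvPolynomial.X j

/-- `pPoly n` is the polynomial `p_n(T)`, the coefficient of `k^n` in `Σ_{i=0}^∞ f^i/i!`. -/
def pPoly (n : ℕ) : MvPolynomial ℕ ℚ :=
  ∑ i ∈ Finset.range (n + 1),
    MvPolynomial.C ((i.factorial : ℚ)⁻¹) * PowerSeries.coeff (R := MvPolynomial ℕ ℚ) n (fSeries ^ i)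

/-- `pPolyZ` extends `pPoly` by `0` to negative indices. -/
def pPolyZ (n : ℤ) : MvPolynomial ℕ ℚ := if 0 ≤ n then pPoly n.toNat else 0

namespace SchurAux

/-- coefficientwise partial derivative on power series over `ℚ[T]`. -/
def Dmap (r : ℕ) (φ : PowerSeries (MvPolynomial ℕ ℚ)) : PowerSeries (MvPolynomial ℕ ℚ) :=
  PowerSeries.mk fun n => pderiv r (PowerSeries.coeff n φ)

lemma coeff_Dmap (r n : ℕ) (φ : PowerSeries (MvPolynomial ℕ ℚ)) :
    PowerSeries.coeff n (Dmap r φ) = pderiv r (PowerSeries.coeff n φ) :=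
  PowerSeries.coeff_mk _ _

lemma Dmap_mul (r : ℕ) (φ ψ : PowerSeries (MvPolynomial ℕ ℚ)) :
    Dmap r (φ * ψ) = Dmap r φ * ψ + φ * Dmap r ψ := by
  ext n
  simp only [map_add, coeff_Dmap, PowerSeries.coeff_mul, map_sum, pderiv_mul]
  rw [← Finset.sum_add_distrib]

lemma Dmap_one (r : ℕ) : Dmap r 1 = 0 := by
  ext n
  simp only [coeff_Dmap, PowerSeries.coeff_one]
  split <;> simp [pderiv_one]


lemma Dmap_pow (r : ℕ) (φ : PowerSeries (MvPolynomial ℕ ℚ)) (i : ℕ) :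
    Dmap r (φ ^ (i + 1)) = (i + 1) • (φ ^ i * Dmap r φ) := by
  induction i with
  | zero => simp [Dmap_mul, Dmap_one]
  | succ i ih =>
      rw [pow_succ, Dmap_mul, ih, pow_succ, succ_nsmul, succ_nsmul, add_mul, smul_mul_assoc]
      ring_nf

lemma Dmap_fSeries {r : ℕ} (hr : 1 ≤ r) :
    Dmap r fSeries = PowerSeries.monomial r 1 := by
  refine PowerSeries.ext fun n => ?_
  rw [coeff_Dmap, PowerSeries.coeff_monomial]
  simp only [fSeries, PowerSeries.coeff_mk]
  rcases eq_or_ne n 0 with h0 | h0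
  · subst h0
    simp [show ¬(0 = r) from by omega]
  · rw [if_neg h0]
    rcases eq_or_ne n r with h | h
    · subst h; simp [pderiv_X_self]
    · rw [pderiv_X_of_ne h, if_neg h]

lemma Dmap_zero_fSeries : Dmap 0 fSeries = 0 := by
  refine PowerSeries.ext fun n => ?_
  rw [coeff_Dmap]
  simp only [fSeries, PowerSeries.coeff_mk]
  rcases eq_or_ne n 0 with h0 | h0
  · subst h0; simp
  · rw [if_neg h0, pderiv_X_of_ne h0, map_zero]

lemma coeff_fSeries_pow_eq_zero {k i : ℕ} (h : k < i) :
    PowerSeries.coeff (R := MvPolynomial ℕ ℚ) k (fSeries ^ i) = 0 := by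
  obtain ⟨ψ, hψ⟩ : (PowerSeries.X : PowerSeries (MvPolynomial ℕ ℚ)) ∣ fSeries :=
    PowerSeries.X_dvd_iff.mpr (by simp [fSeries, PowerSeries.constantCoeff_mk])
  rw [hψ, mul_pow, mul_comm, PowerSeries.coeff_mul_X_pow', if_neg (by omega)]

lemma pPoly_eq_sum_range {n N : ℕ} (h : n + 1 ≤ N) :
    pPoly n = ∑ i ∈ Finset.range N,
      MvPolynomial.C ((i.factorial : ℚ)⁻¹) *
        PowerSeries.coeff (R := MvPolynomial ℕ ℚ) n (fSeries ^ i) := by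
  unfold pPoly
  refine Finset.sum_subset (Finset.range_subset_range.mpr h) fun i _ hi => ?_
  rw [coeff_fSeries_pow_eq_zero (by simp at hi ⊢; omega), mul_zero]

lemma fact_coeff_step (i : ℕ) (x : MvPolynomial ℕ ℚ) :
    MvPolynomial.C (((i + 1).factorial : ℚ)⁻¹) * ((i + 1) • x) =
      MvPolynomial.C ((i.factorial : ℚ)⁻¹) * x := by
  rw [nsmul_eq_mul, ← mul_assoc, ← MvPolynomial.C_eq_coe_nat, ← map_mul]
  congr 1
  have h2 : (i.factorial : ℚ) ≠ 0 := Nat.cast_ne_zero.mpr i.factorial_ne_zero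
  have h1 : ((i : ℚ) + 1) ≠ 0 := by positivity
  rw [Nat.factorial_succ]
  push_cast
  field_simp

lemma pderiv_pPoly {r : ℕ} (hr : 1 ≤ r) (n : ℕ) :
    pderiv r (pPoly n) = if r ≤ n then pPoly (n - r) else 0 := by
  conv_lhs => rw [pPoly]
  rw [map_sum]
  simp only [pderiv_C_mul]
  rw [Finset.sum_range_succ']
  have h0 : pderiv r (PowerSeries.coeff (R := MvPolynomial ℕ ℚ) n (fSeries ^ 0)) = 0 := by
    rw [pow_zero, PowerSeries.coeff_one]
    split <;> simp [pderiv_one]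
  rw [h0, mul_zero, add_zero]
  have key : ∀ i : ℕ, pderiv r (PowerSeries.coeff (R := MvPolynomial ℕ ℚ) n (fSeries ^ (i + 1))) =
      (i + 1) • (if r ≤ n then PowerSeries.coeff (R := MvPolynomial ℕ ℚ) (n - r) (fSeries ^ i) else 0) := by
    intro i
    rw [← coeff_Dmap, Dmap_pow, Dmap_fSeries hr, map_nsmul]
    congr 1
    rw [← PowerSeries.X_pow_eq, PowerSeries.coeff_mul_X_pow']
  simp only [key]
  by_cases hrn : r ≤ n
  · simp only [if_pos hrn]
    rw [pPoly_eq_sum_range (n := n - r) (N := n) (by omega)]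
    exact Finset.sum_congr rfl fun i _ => fact_coeff_step i _
  · simp only [if_neg hrn, smul_zero, mul_zero, Finset.sum_const_zero]

lemma pderiv_zero_pPoly (n : ℕ) : pderiv 0 (pPoly n) = 0 := by
  unfold pPoly
  rw [map_sum]
  simp only [pderiv_C_mul]
  rw [Finset.sum_range_succ']
  have h0 : pderiv 0 (PowerSeries.coeff (R := MvPolynomial ℕ ℚ) n (fSeries ^ 0)) = 0 := by
    rw [pow_zero, PowerSeries.coeff_one]
    rcases eq_or_ne n 0 with h | h <;> simp [h, pderiv_one]
  have key : ∀ i : ℕ, pderiv 0 (PowerSeries.coeff (R := MvPolynomial ℕ ℚ) n (fSeries ^ (i + 1))) = 0 := by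
    intro i
    rw [← coeff_Dmap, Dmap_pow, Dmap_zero_fSeries, mul_zero, smul_zero, map_zero]
  simp only [key, h0, mul_zero, Finset.sum_const_zero, add_zero, zero_add]

lemma pderiv_pPolyZ {r : ℕ} (hr : 1 ≤ r) (z : ℤ) :
    pderiv r (pPolyZ z) = pPolyZ (z - r) := by
  unfold pPolyZ
  by_cases hz : 0 ≤ z
  · rw [if_pos hz, pderiv_pPoly hr]
    by_cases hrz : (r : ℤ) ≤ z
    · rw [if_pos (by omega), if_pos (by omega)]
      congr 1
      omega
    · rw [if_neg (by omega), if_neg (by omega)]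
  · rw [if_neg hz, if_neg (by omega), map_zero]

lemma pderiv_zero_pPolyZ (z : ℤ) : pderiv 0 (pPolyZ z) = 0 := by
  unfold pPolyZ
  split
  · exact pderiv_zero_pPoly _
  · exact map_zero _

lemma pderiv_prod (r : ℕ) {ι : Type*} [DecidableEq ι] (s : Finset ι)
    (f : ι → MvPolynomial ℕ ℚ) :
    pderiv r (∏ i ∈ s, f i) =
      ∑ t ∈ s, (∏ i ∈ s.erase t, f i) * pderiv r (f t) := by
  induction s using Finset.induction with
  | empty => simp [pderiv_one]
  | @insert a s ha ih =>
      rw [Finset.prod_insert ha, pderiv_mul, ih, Finset.sum_insert ha,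
        Finset.erase_insert ha]
      have h2 : ∑ t ∈ s, (∏ i ∈ (insert a s).erase t, f i) * pderiv r (f t)
          = ∑ t ∈ s, f a * ((∏ i ∈ s.erase t, f i) * pderiv r (f t)) := by
        refine Finset.sum_congr rfl fun t ht => ?_
        rw [Finset.erase_insert_of_ne (by rintro rfl; exact ha ht),
          Finset.prod_insert (fun h => ha (Finset.mem_of_mem_erase h))]
        ring
      rw [h2, ← Finset.mul_sum]
      ring

lemma pderiv_det {g : ℕ} (r : ℕ) (M : Matrix (Fin g) (Fin g) (MvPolynomial ℕ ℚ)) :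
    pderiv r M.det = ∑ t, (M.updateRow t fun j => pderiv r (M t j)).det := by
  rw [← Matrix.det_transpose M, Matrix.det_apply', map_sum]
  have hC : ∀ c : ℤ, pderiv r ((c : MvPolynomial ℕ ℚ)) = 0 := fun c => by
    rw [← map_intCast (MvPolynomial.C : ℚ →+* MvPolynomial ℕ ℚ) c]
    exact pderiv_C
  have h1 : ∀ σ : Equiv.Perm (Fin g),
      pderiv r (((Equiv.Perm.sign σ : ℤ) : MvPolynomial ℕ ℚ) * ∏ i, M.transpose (σ i) i)
        = ∑ t, ((Equiv.Perm.sign σ : ℤ) : MvPolynomial ℕ ℚ) *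
            ((∏ i ∈ Finset.univ.erase t, M.transpose (σ i) i) *
              pderiv r (M.transpose (σ t) t)) := by
    intro σ
    rw [pderiv_mul, hC, zero_mul, zero_add, pderiv_prod, Finset.mul_sum]
  simp only [h1]
  rw [Finset.sum_comm]
  refine Finset.sum_congr rfl fun t _ => ?_
  rw [← Matrix.det_transpose (M.updateRow t fun j => pderiv r (M t j)), Matrix.det_apply']
  refine Finset.sum_congr rfl fun σ _ => ?_
  congr 1
  rw [← Finset.mul_prod_erase Finset.univ _ (Finset.mem_univ t)]
  conv_lhs => rw [mul_comm]
  congr 1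
  · simp [Matrix.transpose_apply, Matrix.updateRow_self]
  · refine Finset.prod_congr rfl fun i hi => ?_
    rw [Matrix.transpose_apply, Matrix.transpose_apply,
      Matrix.updateRow_ne (Finset.ne_of_mem_erase hi)]

lemma pPolyZ_of_neg {z : ℤ} (h : z < 0) : pPolyZ z = 0 := if_neg (by omega)

lemma pderiv_ne_zero_of_mem_vars {p : MvPolynomial ℕ ℚ} {x : ℕ} (h : x ∈ p.vars) :
    pderiv x p ≠ 0 := by
  classical
  obtain ⟨d, hd, hxd⟩ := (mem_vars x).1 h
  have hdx : d x ≠ 0 := Finsupp.mem_support_iff.1 hxd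
  intro h0
  have hrw : pderiv x p = ∑ d' ∈ p.support,
      monomial (d' - Finsupp.single x 1) (coeff d' p * d' x) := by
    conv_lhs => rw [p.as_sum]
    rw [map_sum]
    exact Finset.sum_congr rfl fun d' _ => pderiv_monomial
  have hc : coeff (d - Finsupp.single x 1) (pderiv x p) = coeff d p * d x := by
    rw [hrw, MvPolynomial.coeff_sum]
    rw [Finset.sum_eq_single d (fun d' hd' hne => ?_) (fun hnd => absurd hd hnd)]
    · rw [coeff_monomial, if_pos rfl]
    · rw [coeff_monomial]
      by_cases hcond : d' - Finsupp.single x 1 = d - Finsupp.single x 1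
      · by_cases hzx : d' x = 0
        · simp [hzx]
        · exfalso
          apply hne
          ext y
          have hy := DFunLike.congr_fun hcond y
          rw [Finsupp.tsub_apply, Finsupp.tsub_apply] at hy
          rcases eq_or_ne y x with rfl | hyx
          · simp only [Finsupp.single_eq_same] at hy
            omega
          · simpa [Finsupp.single_eq_of_ne hyx] using hy
      · rw [if_neg hcond]
  rw [h0, MvPolynomial.coeff_zero] at hc
  have h1 : coeff d p ≠ 0 := MvPolynomial.mem_support_iff.1 hd
  have h2 : ((d x : ℚ)) ≠ 0 := Nat.cast_ne_zero.mpr hdx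
  exact (mul_ne_zero h1 h2) hc.symm

end SchurAux

/-- Let `G` be the finite set of gaps of the numerical semigroup `⟨a 1, …, a m⟩`
generated by a telescopic sequence, `g = G.card`, and let `w 0 < w 1 < ⋯ < w (g-1)`
enumerate the gaps (`w` strictly monotone with range `G`).  The Schur function
`S_{μ(A_m)}(T) = det (p_{μ_i − i + j}(T))_{1 ≤ i,j ≤ g}` attached to the partition
`μ(A_m) = (w_g − (g−1), …, w_2 − 1, w_1)` lies in the `ℚ`-subalgebra of
`ℚ[T_1, T_2, …]` generated by the variables `T_{w_1}, …, T_{w_g}`. -/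
theorem schur_mem_adjoin_gap_vars (m : ℕ) (a : ℕ → ℕ) (hT : Telescopic m a)
    (G : Finset ℕ)
    (hG : ∀ n, n ∈ G ↔ ¬∃ ℓ : ℕ → ℕ, (∀ j, (j < 1 ∨ m < j) → ℓ j = 0) ∧
      n = ∑ j ∈ Finset.Icc 1 m, ℓ j * a j)
    (w : Fin G.card → ℕ) (hw : StrictMono w) (hwG : ∀ n, n ∈ G ↔ ∃ i, w i = n) :
    Matrix.det (Matrix.of fun i j : Fin G.card =>
      pPolyZ ((w ⟨G.card - 1 - i.val, by have := i.isLt; omega⟩ : ℤ) -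
        (G.card - 1 - i.val : ℕ) - (i.val : ℤ) + (j.val : ℤ))) ∈
      Algebra.adjoin ℚ (Set.range fun i : Fin G.card =>
        (MvPolynomial.X (w i) : MvPolynomial ℕ ℚ)) := by
  classical
  have hrev : ∀ i : Fin G.card, G.card - 1 - i.val < G.card := fun i => by
    have := i.isLt; omega
  have hMeq : (Matrix.of fun i j : Fin G.card =>
      pPolyZ ((w ⟨G.card - 1 - i.val, by have := i.isLt; omega⟩ : ℤ) -
        (G.card - 1 - i.val : ℕ) - (i.val : ℤ) + (j.val : ℤ))) =
      Matrix.of (fun i j : Fin G.card =>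
        pPolyZ ((w ⟨G.card - 1 - i.val, hrev i⟩ : ℤ) - (G.card - 1 : ℤ) + (j.val : ℤ))) := by
    refine Matrix.ext fun i j => ?_
    simp only [Matrix.of_apply]
    have hi := i.isLt
    refine congrArg pPolyZ ?_
    omega
  rw [hMeq]
  set M : Matrix (Fin G.card) (Fin G.card) (MvPolynomial ℕ ℚ) :=
    Matrix.of (fun i j : Fin G.card =>
      pPolyZ ((w ⟨G.card - 1 - i.val, hrev i⟩ : ℤ) - (G.card - 1 : ℤ) + (j.val : ℤ))) with hM
  -- representability
  have hadd : ∀ u v : ℕ,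
      (∃ ℓ : ℕ → ℕ, (∀ j, (j < 1 ∨ m < j) → ℓ j = 0) ∧ u = ∑ j ∈ Finset.Icc 1 m, ℓ j * a j) →
      (∃ ℓ : ℕ → ℕ, (∀ j, (j < 1 ∨ m < j) → ℓ j = 0) ∧ v = ∑ j ∈ Finset.Icc 1 m, ℓ j * a j) →
      (∃ ℓ : ℕ → ℕ, (∀ j, (j < 1 ∨ m < j) → ℓ j = 0) ∧
        u + v = ∑ j ∈ Finset.Icc 1 m, ℓ j * a j) := by
    rintro u v ⟨ℓ1, h1, rfl⟩ ⟨ℓ2, h2, rfl⟩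
    refine ⟨fun j => ℓ1 j + ℓ2 j, fun j hj => ?_, ?_⟩
    · show ℓ1 j + ℓ2 j = 0
      rw [h1 j hj, h2 j hj]
    · rw [← Finset.sum_add_distrib]
      refine Finset.sum_congr rfl fun j _ => ?_
      show ℓ1 j * a j + ℓ2 j * a j = (ℓ1 j + ℓ2 j) * a j
      ring
  have key : ∀ x : ℕ, x ∉ Set.range w → pderiv x (Matrix.det M) = 0 := by
    intro x hx
    have hxG : x ∉ G := fun hxG => hx (by obtain ⟨i, hi⟩ := (hwG x).1 hxG; exact ⟨i, hi⟩)
    have hxRep : ∃ ℓ : ℕ → ℕ, (∀ j, (j < 1 ∨ m < j) → ℓ j = 0) ∧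
        x = ∑ j ∈ Finset.Icc 1 m, ℓ j * a j := by
      by_contra hnot
      exact hxG ((hG x).2 hnot)
    rw [SchurAux.pderiv_det]
    refine Finset.sum_eq_zero fun t _ => ?_
    rcases Nat.eq_zero_or_pos x with rfl | hx1
    · apply Matrix.det_eq_zero_of_row_eq_zero t
      intro j
      rw [Matrix.updateRow_self]
      exact SchurAux.pderiv_zero_pPolyZ _
    · set i1 : Fin G.card := ⟨G.card - 1 - t.val, hrev t⟩ with hi1
      have hent : ∀ j : Fin G.card, M t j =
          pPolyZ ((w i1 : ℤ) - (G.card - 1 : ℤ) + (j.val : ℤ)) := fun j => rfl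
      by_cases hneg : (w i1 : ℤ) < x
      · apply Matrix.det_eq_zero_of_row_eq_zero t
        intro j
        rw [Matrix.updateRow_self, hent j, SchurAux.pderiv_pPolyZ hx1]
        apply SchurAux.pPolyZ_of_neg
        have hj := j.isLt
        have ht := t.isLt
        omega
      · push_neg at hneg
        have hwx : x ≤ w i1 := by exact_mod_cast hneg
        have hu : (w i1 - x : ℕ) ∈ G := by
          by_contra huG
          have hurep : ∃ ℓ : ℕ → ℕ, (∀ j, (j < 1 ∨ m < j) → ℓ j = 0) ∧
              (w i1 - x : ℕ) = ∑ j ∈ Finset.Icc 1 m, ℓ j * a j := by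
            by_contra hnot
            exact huG ((hG _).2 hnot)
          have hsum := hadd _ _ hurep hxRep
          rw [Nat.sub_add_cancel hwx] at hsum
          have hwi1G : w i1 ∈ G := (hwG _).2 ⟨i1, rfl⟩
          exact ((hG _).1 hwi1G) hsum
        obtain ⟨i2, hi2⟩ := (hwG _).1 hu
        have hne : i2 ≠ i1 := by
          intro h
          rw [h] at hi2
          omega
        set t2 : Fin G.card := ⟨G.card - 1 - i2.val, hrev i2⟩ with ht2def
        have ht2 : t ≠ t2 := by
          intro h
          apply hne
          have h1 : t.val = G.card - 1 - i2.val := by rw [h]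
          have h2 := t.isLt
          have h3 := i2.isLt
          apply Fin.ext
          simp only [hi1]
          omega
        apply Matrix.det_zero_of_row_eq ht2
        funext j
        rw [Matrix.updateRow_self, Matrix.updateRow_ne (Ne.symm ht2)]
        rw [hent j, SchurAux.pderiv_pPolyZ hx1]
        have hrow : M t2 j = pPolyZ ((w ⟨G.card - 1 - t2.val, hrev t2⟩ : ℤ) -
            (G.card - 1 : ℤ) + (j.val : ℤ)) := rfl
        rw [hrow]
        have hfin : (⟨G.card - 1 - t2.val, hrev t2⟩ : Fin G.card) = i2 := by
          apply Fin.ext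
          have := i2.isLt
          simp only [ht2def]
          omega
        rw [hfin]
        refine congrArg pPolyZ ?_
        have hcast : ((w i2 : ℕ) : ℤ) = (w i1 : ℤ) - x := by rw [hi2]; omega
        omega
  have hvars : ↑(Matrix.det M).vars ⊆ Set.range w := by
    intro x hx
    by_contra hxr
    exact SchurAux.pderiv_ne_zero_of_mem_vars (Finset.mem_coe.1 hx) (key x hxr)
  have hXr : (Set.range fun i : Fin G.card => (MvPolynomial.X (w i) : MvPolynomial ℕ ℚ)) =
      MvPolynomial.X '' Set.range w := by
    rw [← Set.range_comp]
    rfl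
  rw [hXr, ← MvPolynomial.supported_eq_adjoin_X]
  exact MvPolynomial.mem_supported.2 hvars

end
end

section
/- For any partition μ = (μ_1 ≥ μ_2 ≥ ⋯ ≥ μ_ℓ ≥ 0) of non-negative integers, the polynomial S_μ(u) = det(p_{μ_i − i + j}(u))_{1 ≤ i, j ≤ ℓ} is Hurwitz integral over ℤ: for every (k_1, …, k_g) ∈ ℤ_{≥0}^g, the number k_1! ⋯ k_g! times the coefficient of u_1^{k_1} ⋯ u_g^{k_g} in S_μ(u) is an integer. -/
open Finset

noncomputable section

/-- The subring of Hurwitz-integral polynomials. -/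
def HurwitzSubring (g : ℕ) : Subring (MvPolynomial (Fin g) ℚ) where
  carrier := {f | ∀ d : Fin g →₀ ℕ,
    (∏ i, ((d i).factorial : ℚ)) * MvPolynomial.coeff d f ∈ (⊥ : Subring ℚ)}
  zero_mem' := by
    intro d
    rw [MvPolynomial.coeff_zero, mul_zero]
    exact zero_mem _
  one_mem' := by
    intro d
    rw [MvPolynomial.coeff_one]
    split
    · rw [mul_one, ← Nat.cast_prod]
      exact natCast_mem _ _
    · rw [mul_zero]
      exact zero_mem _
  add_mem' := by
    intro p q hp hq d
    rw [MvPolynomial.coeff_add, mul_add]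
    exact add_mem (hp d) (hq d)
  neg_mem' := by
    intro p hp d
    rw [MvPolynomial.coeff_neg, mul_neg]
    exact neg_mem (hp d)
  mul_mem' := by
    intro p q hp hq d
    rw [MvPolynomial.coeff_mul, Finset.mul_sum]
    refine sum_mem fun x hx => ?_
    rw [Finset.HasAntidiagonal.mem_antidiagonal] at hx
    have hd : ∀ i, d i = x.1 i + x.2 i := by
      intro i; rw [← hx]; rfl
    have hfac : (∏ i, ((d i).factorial : ℚ)) =
        (∏ i, (((x.1 i + x.2 i).choose (x.1 i) : ℕ) : ℚ)) *
        ((∏ i, ((x.1 i).factorial : ℚ)) * (∏ i, ((x.2 i).factorial : ℚ))) := by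
      rw [← Finset.prod_mul_distrib, ← Finset.prod_mul_distrib]
      refine Finset.prod_congr rfl fun i _ => ?_
      rw [hd i]
      push_cast [← Nat.add_choose_mul_factorial_mul_factorial (x.1 i) (x.2 i)]
      rw [← Nat.choose_symm_add]
      ring
    rw [hfac]
    have h1 := hp x.1
    have h2 := hq x.2
    have : (∏ i, (((x.1 i + x.2 i).choose (x.1 i) : ℕ) : ℚ)) *
        ((∏ i, ((x.1 i).factorial : ℚ)) * (∏ i, ((x.2 i).factorial : ℚ))) *
        (MvPolynomial.coeff x.1 p * MvPolynomial.coeff x.2 q) =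
        (∏ i, (((x.1 i + x.2 i).choose (x.1 i) : ℕ) : ℚ)) *
        (((∏ i, ((x.1 i).factorial : ℚ)) * MvPolynomial.coeff x.1 p) *
         ((∏ i, ((x.2 i).factorial : ℚ)) * MvPolynomial.coeff x.2 q)) := by ring
    rw [this]
    refine mul_mem ?_ (mul_mem h1 h2)
    rw [← Nat.cast_prod]
    exact natCast_mem _ _

/-- Let `w 0 < ⋯ < w (g−1)` be the gaps of the numerical semigroup generated by a
telescopic sequence, `g = G.card`.  For `n : ℤ` let `P n ∈ ℚ[u_1, …, u_g]` be the
polynomial `p_n(u) = Σ u_1^{n_1} ⋯ u_g^{n_g}/(n_1! ⋯ n_g!)` (sum over tuples with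
`Σ w_i n_i = n`), characterized here by its coefficients, with `P n = 0` for `n < 0`.
For any partition `μ = (μ_1 ≥ ⋯ ≥ μ_L ≥ 0)`, the Schur polynomial
`S_μ(u) = det (p_{μ_i − i + j}(u))_{1 ≤ i,j ≤ L}` is Hurwitz integral over `ℤ`:
for every exponent tuple `d`, the number `d_1! ⋯ d_g!` times the coefficient of
`u_1^{d_1} ⋯ u_g^{d_g}` in `S_μ(u)` is an integer. -/
theorem schur_hurwitz_integral (m : ℕ) (a : ℕ → ℕ) (hT : Telescopic m a)
    (G : Finset ℕ)
    (hG : ∀ n, n ∈ G ↔ ¬∃ ℓ : ℕ → ℕ, (∀ j, (j < 1 ∨ m < j) → ℓ j = 0) ∧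
      n = ∑ j ∈ Finset.Icc 1 m, ℓ j * a j)
    (w : Fin G.card → ℕ) (hw : StrictMono w) (hwG : ∀ n, n ∈ G ↔ ∃ i, w i = n)
    (P : ℤ → MvPolynomial (Fin G.card) ℚ)
    (hP0 : ∀ n : ℤ, n < 0 → P n = 0)
    (hP : ∀ n : ℤ, 0 ≤ n → ∀ d : Fin G.card →₀ ℕ,
      MvPolynomial.coeff d (P n) =
        if (∑ i, (w i : ℤ) * d i) = n then (∏ i, ((d i).factorial : ℚ))⁻¹ else 0)
    (L : ℕ) (μ : Fin L → ℕ) (hμ : Antitone μ) :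
    ∀ d : Fin G.card →₀ ℕ, ∃ z : ℤ,
      (∏ i, ((d i).factorial : ℚ)) *
        MvPolynomial.coeff d
          (Matrix.det (Matrix.of fun i j : Fin L =>
            P ((μ i : ℤ) - (i.val : ℤ) + (j.val : ℤ)))) = (z : ℚ) := by
  have hPmem : ∀ n : ℤ, P n ∈ HurwitzSubring G.card := by
    intro n d
    rcases lt_or_ge n 0 with hn | hn
    · rw [hP0 n hn, MvPolynomial.coeff_zero, mul_zero]
      exact zero_mem _
    · rw [hP n hn d]
      split
      · have hne : (∏ i, ((d i).factorial : ℚ)) ≠ 0 := by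
          refine Finset.prod_ne_zero_iff.2 fun i _ => ?_
          exact_mod_cast (Nat.factorial_pos _).ne'
        rw [mul_inv_cancel₀ hne]
        exact one_mem _
      · rw [mul_zero]
        exact zero_mem _
  have hdet : (Matrix.det (Matrix.of fun i j : Fin L =>
      P ((μ i : ℤ) - (i.val : ℤ) + (j.val : ℤ)))) ∈ HurwitzSubring G.card := by
    rw [Matrix.det_apply']
    refine sum_mem fun σ _ => ?_
    refine mul_mem ?_ (prod_mem fun i _ => hPmem _)
    exact intCast_mem _ _
  intro d
  have := hdet d
  rw [Subring.mem_bot] at this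
  obtain ⟨z, hz⟩ := this
  exact ⟨z, hz.symm⟩


end
end
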